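/- For the complete graph K_n (n ≥ 3) and any edge e ∈ E(K_n), dem(K_n - e) = n - 2. -/

import Mathlib

open SimpleGraph

variable {V : Type*}

/-- Edge `e` is monitored by vertex `x` in `G`: some distance from `x` changes
when `e` is removed. -/
def monitors (G : SimpleGraph V) (x : V) (e : Sym2 V) : Prop :=
  ∃ y : V, G.edist x y ≠ (G.deleteEdges {e}).edist x y

/-- `M` is a distance-edge-monitoring set of `G`. -/
def IsDEMSet (G : SimpleGraph V) (M : Set V) : Prop :=
  ∀ e ∈ G.edgeSet, ∃ x ∈ M, monitors G x e

/-- The distance-edge-monitoring number of `G`. -/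
noncomputable def dem (G : SimpleGraph V) : ℕ :=
  sInf {n | ∃ M : Set V, M.ncard = n ∧ IsDEMSet G M}

/-- An endpoint of an edge always monitors it. -/
lemma endpoint_monitors (G : SimpleGraph V) {u v : V} (h : G.Adj u v) :
    monitors G u s(u, v) := by
  refine ⟨v, ?_⟩
  rw [edist_eq_one_iff_adj.mpr h]
  intro hc
  have := edist_eq_one_iff_adj.mp hc.symm
  simp [deleteEdges_adj] at this

/-- Key lemma: in K_n minus edge e, a non-endpoint of an edge f ≠ e does not
monitor f (when n ≥ 4). -/
lemma non_endpoint_no_monitor {n : ℕ} (hn : 4 ≤ n) (a b u v x : Fin n)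
    (hab : a ≠ b) (huv : u ≠ v) (hf : s(u, v) ≠ s(a, b))
    (hxu : x ≠ u) (hxv : x ≠ v) :
    ¬ monitors ((⊤ : SimpleGraph (Fin n)).deleteEdges {s(a, b)}) x s(u, v) := by
  set G := (⊤ : SimpleGraph (Fin n)).deleteEdges {s(a, b)} with hG
  set H := G.deleteEdges {s(u, v)} with hH
  intro ⟨y, hy⟩
  apply hy
  refine le_antisymm (edist_anti (deleteEdges_le _)) ?_
  by_cases hxy : x = y
  · subst hxy; simp
  by_cases hadj : G.Adj x y
  · have hH1 : H.Adj x y := by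
      simp only [hH, deleteEdges_adj, Set.mem_singleton_iff]
      refine ⟨hadj, fun hc => ?_⟩
      rw [Sym2.eq_iff] at hc
      rcases hc with ⟨h1, h2⟩ | ⟨h1, h2⟩ <;> [exact hxu h1; exact hxv h1]
    rw [edist_eq_one_iff_adj.mpr hH1, edist_eq_one_iff_adj.mpr hadj]
  · -- x ≠ y, not adjacent in G: then s(x,y) = e, G.edist ≥ 2, H.edist ≤ 2
    have hxye : s(x, y) = s(a, b) := by
      simp only [hG, deleteEdges_adj, top_adj, Set.mem_singleton_iff] at hadj
      tauto
    have h2le : 2 ≤ G.edist x y := by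
      have h1 : 1 < G.edist x y := by
        refine lt_of_le_of_ne (Order.one_le_iff_pos.mpr (edist_pos_of_ne hxy)) ?_
        intro hc
        exact hadj (edist_eq_one_iff_adj.mp hc.symm)
      exact Order.add_one_le_of_lt h1
    refine le_trans ?_ h2le
    -- find w avoiding {x, y, z}
    set z : Fin n := if y = u then v else if y = v then u else x with hz
    have hcard : ({x, y, z} : Finset (Fin n)).card < n := by
      calc ({x, y, z} : Finset (Fin n)).card
          ≤ 3 := by
            refine le_trans (Finset.card_insert_le _ _) ?_
            simp [Finset.card_insert_le _ _, Nat.add_le_add_iff_right]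
            have := Finset.card_le_two (a := y) (b := z); omega
      _ < n := by omega
    have : (({x, y, z} : Finset (Fin n))ᶜ).Nonempty := by
      rw [← Finset.card_pos, Finset.card_compl, Fintype.card_fin]
      omega
    obtain ⟨w, hw⟩ := this
    simp only [Finset.mem_compl, Finset.mem_insert, Finset.mem_singleton, not_or] at hw
    obtain ⟨hwx, hwy, hwz⟩ := hw
    have hxw : H.Adj x w := by
      simp only [hH, hG, deleteEdges_adj, top_adj, Set.mem_singleton_iff]
      refine ⟨⟨fun h => hwx h.symm, fun hc => ?_⟩, fun hc => ?_⟩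
      · rw [← hxye] at hc
        exact hwy (Sym2.congr_right.mp hc)
      · rw [Sym2.eq_iff] at hc
        rcases hc with ⟨h1, h2⟩ | ⟨h1, h2⟩ <;> [exact hxu h1; exact hxv h1]
    have hwy' : H.Adj w y := by
      simp only [hH, hG, deleteEdges_adj, top_adj, Set.mem_singleton_iff]
      refine ⟨⟨hwy, fun hc => ?_⟩, fun hc => ?_⟩
      · rw [← hxye] at hc
        exact hwx (Sym2.congr_left.mp hc)
      · rw [Sym2.eq_iff] at hc
        rcases hc with ⟨h1, h2⟩ | ⟨h1, h2⟩
        · apply hwz; rw [hz, if_neg, if_pos h2]; exact h1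
          rw [h2]; exact huv.symm
        · apply hwz; rw [hz, if_pos h2]; exact h1
    calc H.edist x y ≤ H.edist x w + H.edist w y := SimpleGraph.edist_triangle
    _ ≤ 1 + 1 := by
        gcongr
        exacts [le_of_eq (edist_eq_one_iff_adj.mpr hxw),
          le_of_eq (edist_eq_one_iff_adj.mpr hwy')]
    _ = 2 := by norm_num

theorem stmt17 (n : ℕ) (hn : 3 ≤ n) (e : Sym2 (Fin n))
    (he : e ∈ (⊤ : SimpleGraph (Fin n)).edgeSet) :
    dem ((⊤ : SimpleGraph (Fin n)).deleteEdges {e}) = n - 2 := by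
  induction e using Sym2.ind with
  | _ a b =>
  rw [mem_edgeSet, top_adj] at he
  set G := (⊤ : SimpleGraph (Fin n)).deleteEdges {s(a, b)} with hG
  have hGadj : ∀ x y : Fin n, G.Adj x y ↔ x ≠ y ∧ s(x, y) ≠ s(a, b) := by
    intro x y; simp [hG, deleteEdges_adj]
  -- membership: M = {a,b}ᶜ
  have hmem : (n - 2) ∈ {k | ∃ M : Set (Fin n), M.ncard = k ∧ IsDEMSet G M} := by
    refine ⟨({a, b} : Set (Fin n))ᶜ, ?_, ?_⟩
    · have h2 := Set.ncard_add_ncard_compl ({a, b} : Set (Fin n))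
      rw [Set.ncard_pair he, Nat.card_eq_fintype_card, Fintype.card_fin] at h2
      omega
    · intro f hf
      induction f using Sym2.ind with
      | _ u v =>
      rw [mem_edgeSet, hGadj] at hf
      obtain ⟨huv, hfne⟩ := hf
      have hcase : u ∉ ({a, b} : Set (Fin n)) ∨ v ∉ ({a, b} : Set (Fin n)) := by
        by_contra hc
        push_neg at hc
        obtain ⟨hu, hv⟩ := hc
        simp only [Set.mem_insert_iff, Set.mem_singleton_iff] at hu hv
        apply hfne
        rcases hu with rfl | rfl <;> rcases hv with rfl | rfl <;>
          first | (exact absurd rfl huv) | (rw [Sym2.eq_iff]; tauto)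
      have hAdj : G.Adj u v := (hGadj u v).mpr ⟨huv, hfne⟩
      rcases hcase with h | h
      · exact ⟨u, h, endpoint_monitors G hAdj⟩
      · refine ⟨v, h, ?_⟩
        rw [Sym2.eq_swap (a := u)]
        exact endpoint_monitors G hAdj.symm
  refine le_antisymm (Nat.sInf_le hmem) (le_csInf ⟨_, hmem⟩ ?_)
  rintro m ⟨M, hMcard, hDEM⟩
  by_contra hlt
  push_neg at hlt
  -- so m ≤ n - 3, hence Mᶜ has ≥ 3 elements
  have hfin : M.Finite := Set.toFinite _
  have hcompl : 3 ≤ Mᶜ.ncard := by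
    have h2 := Set.ncard_add_ncard_compl M
    rw [hMcard, Nat.card_eq_fintype_card, Fintype.card_fin] at h2
    omega
  have h1 : (Mᶜ).Nonempty := Set.nonempty_of_ncard_ne_zero (by omega)
  obtain ⟨u, hu⟩ := h1
  have h2 : Mᶜ.ncard - 1 = (Mᶜ \ {u}).ncard :=
    (Set.ncard_diff_singleton_of_mem hu).symm
  obtain ⟨v, hv⟩ : (Mᶜ \ {u}).Nonempty := Set.nonempty_of_ncard_ne_zero (by omega)
  have h3 : (Mᶜ \ {u}).ncard - 1 = ((Mᶜ \ {u}) \ {v}).ncard :=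
    (Set.ncard_diff_singleton_of_mem hv).symm
  obtain ⟨w, hw⟩ : ((Mᶜ \ {u}) \ {v}).Nonempty := Set.nonempty_of_ncard_ne_zero (by omega)
  simp only [Set.mem_diff, Set.mem_singleton_iff, Set.mem_compl_iff] at hu hv hw
  obtain ⟨⟨hwM, hwu⟩, hwv⟩ := hw
  obtain ⟨hvM, hvu⟩ := hv
  -- choose an edge f with both endpoints outside M
  obtain ⟨p, q, hpq, hfne, hpM, hqM⟩ :
      ∃ p q : Fin n, p ≠ q ∧ s(p, q) ≠ s(a, b) ∧ p ∉ M ∧ q ∉ M := by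
    rcases eq_or_ne s(u, v) s(a, b) with hce | hce
    · refine ⟨u, w, fun h => hwu h.symm, fun hc => ?_, hu, hwM⟩
      rw [← hce] at hc
      exact hwv (Sym2.congr_right.mp hc)
    · exact ⟨u, v, fun h => hvu h.symm, hce, hu, hvM⟩
  obtain ⟨x, hxM, hmon⟩ := hDEM s(p, q) (by rw [mem_edgeSet, hGadj]; exact ⟨hpq, hfne⟩)
  have hm1 : 1 ≤ m := by
    rcases Nat.eq_zero_or_pos m with h0 | h0
    · rw [h0, Set.ncard_eq_zero hfin] at hMcard
      exact absurd (hMcard ▸ hxM) (Set.notMem_empty x)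
    · exact h0
  exact non_endpoint_no_monitor (by omega) a b p q x he hpq hfne
    (fun h => hpM (h ▸ hxM)) (fun h => hqM (h ▸ hxM)) hmon
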